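/- (Proposition 7.4) Let Σ be a smooth complete simplicial fan in ℝ^n, given by ray vectors v_1,…,v_m ∈ ℤ^n and a finite abstract simplicial complex K on {1,…,m} such that for every face σ ∈ K the vectors {v_j : j ∈ σ} extend to a ℤ-basis of ℤ^n, cone(σ) ∩ cone(τ) = cone(σ ∩ τ) for all faces σ, τ, and the cones cone(σ) = {Σ_{j∈σ} c_j v_j : c_j ≥ 0} cover ℝ^n. Then for each face σ the assignment α^J ↦ ∏_{j∈σ} β_j^{⟨J, v_j⟩} (J ∈ ℤ^n) induces a well-defined ring isomorphism S^±_ℤ(α)/J_σ → ℤ[β_j^{±1} : j ∈ σ], and these assemble into a ring isomorphism ξ* from the algebra P_K(α;Σ) of integral piecewise Laurent polynomials on Σ onto the Laurent face algebra F_K[β;Σ], compatible with the homomorphism ξ^{tr} : S^±_ℤ(α) → S^±_ℤ(β) sending α^J to β^{ξ^{tr}J}, where ξ is the n×m integer matrix with columns v_1,…,v_m. (The paper states this for smooth polytopal fans, i.e. normal fans of Delzant polytopes, which are in particular smooth and complete.) -/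

import Mathlib

set_option synthInstance.maxHeartbeats 400000

noncomputable section

/-- The Laurent polynomial ring `S^±_ℤ(α) = ℤ[α₁^{±1},…,αₙ^{±1}]`, realised as the
group algebra of `ℤⁿ` over `ℤ`; the monomial `α^J` is `AddMonoidAlgebra.single J 1`. -/
abbrev LaurentA (n : ℕ) := AddMonoidAlgebra ℤ (Fin n → ℤ)

/-- The ideal `J_σ ⊆ S^±_ℤ(α)` generated by the Euler classes `1 − α^w` for the
`w ∈ ℤⁿ` orthogonal to all rays `v_j` with `j ∈ σ`. -/
def Jsig (n m : ℕ) (v : Fin m → Fin n → ℤ) (σ : Finset (Fin m)) : Ideal (LaurentA n) :=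
  Ideal.span {f | ∃ w : Fin n → ℤ, (∀ j ∈ σ, ∑ k, w k * v j k = 0) ∧
    f = 1 - AddMonoidAlgebra.single w 1}

lemma Jsig_anti (n m : ℕ) (v : Fin m → Fin n → ℤ) {σ τ : Finset (Fin m)} (h : σ ⊆ τ) :
    Jsig n m v τ ≤ Jsig n m v σ :=
  Ideal.span_mono (by rintro f ⟨w, hw, rfl⟩; exact ⟨w, fun j hj => hw j (h hj), rfl⟩)

/-- The subgroup of `ℤ^m` of exponent vectors supported on `σ`. -/
def expSub (m : ℕ) (σ : Finset (Fin m)) : AddSubgroup (Fin m → ℤ) where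
  carrier := {w | ∀ j ∉ σ, w j = 0}
  zero_mem' := fun j _ => rfl
  add_mem' := by intro a b ha hb j hj; simp [ha j hj, hb j hj]
  neg_mem' := by intro a ha j hj; simp [ha j hj]

/-- The Laurent polynomial ring `ℤ[β_j^{±1} : j ∈ σ]` on the variables indexed by `σ`,
realised as the group algebra of the lattice of exponent vectors supported on `σ`. -/
abbrev FSig (m : ℕ) (σ : Finset (Fin m)) := AddMonoidAlgebra ℤ ↥(expSub m σ)

/-- Restriction of exponent vectors from `τ` to `σ`. -/
def restrExp (m : ℕ) (σ τ : Finset (Fin m)) : ↥(expSub m τ) →+ ↥(expSub m σ) where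
  toFun w := ⟨fun j => if j ∈ σ then w.1 j else 0, by intro j hj; simp [hj]⟩
  map_zero' := by
    apply Subtype.ext; funext j; by_cases h : j ∈ σ <;> simp [h]
  map_add' := by
    intro a b; apply Subtype.ext; funext j; by_cases h : j ∈ σ <;> simp [h]

/-- The ring homomorphism `ℤ[β_j^{±1} : j ∈ τ] → ℤ[β_j^{±1} : j ∈ σ]` sending
`β_j ↦ β_j` for `j ∈ σ` and `β_j ↦ 1` for `j ∈ τ∖σ`. -/
def restrR (m : ℕ) (σ τ : Finset (Fin m)) : FSig m τ →+* FSig m σ :=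
  AddMonoidAlgebra.mapDomainRingHom ℤ (restrExp m σ τ)

/-- The algebra `P_K(α;Σ)` of integral piecewise Laurent polynomials on the fan `Σ`
with faces `K`: families `(f_σ)_{σ∈K}` with `f_σ ∈ S^±_ℤ(α)/J_σ`, compatible under the
projections `S^±_ℤ(α)/J_τ → S^±_ℤ(α)/J_σ` for `σ ⊆ τ`. -/
def Pring (n m : ℕ) (v : Fin m → Fin n → ℤ) (K : Finset (Finset (Fin m))) :
    Subring (Π σ : {σ : Finset (Fin m) // σ ∈ K}, LaurentA n ⧸ Jsig n m v σ.1) where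
  carrier := {f | ∀ (σ τ : {σ : Finset (Fin m) // σ ∈ K}) (h : σ.1 ⊆ τ.1),
    Ideal.Quotient.factor (Jsig_anti n m v h) (f τ) = f σ}
  zero_mem' := by intro σ τ h; simp only [Pi.zero_apply, map_zero]
  one_mem' := by intro σ τ h; simp only [Pi.one_apply, map_one]
  add_mem' := by
    intro a b ha hb σ τ h
    simp only [Pi.add_apply, map_add, ha σ τ h, hb σ τ h]
  neg_mem' := by
    intro a ha σ τ h
    simp only [Pi.neg_apply, map_neg, ha σ τ h]
  mul_mem' := by
    intro a b ha hb σ τ h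
    simp only [Pi.mul_apply, map_mul, ha σ τ h, hb σ τ h]

/-- The Laurent face algebra `F_K[β;Σ]`: families `(f_σ)_{σ∈K}` with
`f_σ ∈ ℤ[β_j^{±1} : j ∈ σ]`, compatible under the maps `β_j ↦ 1` (`j ∈ τ∖σ`). -/
def Fring (m : ℕ) (K : Finset (Finset (Fin m))) :
    Subring (Π σ : {σ : Finset (Fin m) // σ ∈ K}, FSig m σ.1) where
  carrier := {f | ∀ σ τ : {σ : Finset (Fin m) // σ ∈ K}, σ.1 ⊆ τ.1 →
    restrR m σ.1 τ.1 (f τ) = f σ}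
  zero_mem' := by intro σ τ h; simp only [Pi.zero_apply, map_zero]
  one_mem' := by intro σ τ h; simp only [Pi.one_apply, map_one]
  add_mem' := by
    intro a b ha hb σ τ h
    simp only [Pi.add_apply, map_add, ha σ τ h, hb σ τ h]
  neg_mem' := by
    intro a ha σ τ h
    simp only [Pi.neg_apply, map_neg, ha σ τ h]
  mul_mem' := by
    intro a b ha hb σ τ h
    simp only [Pi.mul_apply, map_mul, ha σ τ h, hb σ τ h]

/-- The cone of the fan spanned by the rays `v_j` with `j ∈ σ`: all nonnegative real
linear combinations of those rays. -/
def coneR (n m : ℕ) (v : Fin m → Fin n → ℤ) (σ : Finset (Fin m)) : Set (Fin n → ℝ) :=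
  {x | ∃ c : Fin m → ℝ, (∀ j, 0 ≤ c j) ∧ (∀ j ∉ σ, c j = 0) ∧
    ∀ k, x k = ∑ j, c j * ((v j k : ℤ) : ℝ)}

namespace Prop74

open AddMonoidAlgebra

/-- The exponent map `J ↦ (⟨J,v_j⟩ for j ∈ σ, 0 else)`. -/
def theta (n m : ℕ) (v : Fin m → Fin n → ℤ) (σ : Finset (Fin m)) :
    (Fin n → ℤ) →+ ↥(expSub m σ) where
  toFun J := ⟨fun j => if j ∈ σ then ∑ k, J k * v j k else 0, fun j hj => by simp [hj]⟩
  map_zero' := by apply Subtype.ext; funext j; by_cases h : j ∈ σ <;> simp [h]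
  map_add' a b := by
    apply Subtype.ext; funext j; by_cases h : j ∈ σ
    · simp [h, add_mul, Finset.sum_add_distrib]
    · simp [h]

lemma theta_val (n m : ℕ) (v : Fin m → Fin n → ℤ) (σ : Finset (Fin m)) (J : Fin n → ℤ) :
    (theta n m v σ J).1 = fun j => if j ∈ σ then ∑ k, J k * v j k else 0 := rfl

/-- The ring homomorphism `S^±_ℤ(α) → ℤ[β_j^{±1} : j ∈ σ]`. -/
def phi (n m : ℕ) (v : Fin m → Fin n → ℤ) (σ : Finset (Fin m)) :
    LaurentA n →+* FSig m σ := mapDomainRingHom ℤ (theta n m v σ)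

lemma phi_single (n m : ℕ) (v : Fin m → Fin n → ℤ) (σ : Finset (Fin m)) (J : Fin n → ℤ)
    (r : ℤ) : phi n m v σ (AddMonoidAlgebra.single J r) =
      AddMonoidAlgebra.single (theta n m v σ J) r := by
  simp [phi, Finsupp.mapDomain_single]

lemma Jsig_le_ker (n m : ℕ) (v : Fin m → Fin n → ℤ) (σ : Finset (Fin m)) :
    Jsig n m v σ ≤ RingHom.ker (phi n m v σ) := by
  rw [Jsig, Ideal.span_le]
  rintro f ⟨w, hw, rfl⟩
  have hθ : theta n m v σ w = 0 := by
    apply Subtype.ext; funext j; by_cases h : j ∈ σ <;> simp [theta, h, hw j]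
  have : (0 : ↥(expSub m σ)) = ((0 : ↥(expSub m σ)) : ↥(expSub m σ)) := rfl
  simp [RingHom.mem_ker, map_sub, phi_single, hθ, AddMonoidAlgebra.one_def]

/-- The induced map on the quotient. -/
def phiBar (n m : ℕ) (v : Fin m → Fin n → ℤ) (σ : Finset (Fin m)) :
    (LaurentA n ⧸ Jsig n m v σ) →+* FSig m σ :=
  Ideal.Quotient.lift _ (phi n m v σ) (fun _ ha => Jsig_le_ker n m v σ ha)

lemma phiBar_mk_single (n m : ℕ) (v : Fin m → Fin n → ℤ) (σ : Finset (Fin m))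
    (J : Fin n → ℤ) (r : ℤ) :
    phiBar n m v σ (Ideal.Quotient.mk _ (AddMonoidAlgebra.single J r)) =
      AddMonoidAlgebra.single (theta n m v σ J) r := by
  simp only [phiBar, Ideal.Quotient.lift_mk]
  exact phi_single n m v σ J r

/-- Ring-hom extensionality on `AddMonoidAlgebra ℤ G` via monomials. -/
lemma rh_ext {G : Type*} [AddMonoid G] {R : Type*} [Ring R]
    {f g : AddMonoidAlgebra ℤ G →+* R}
    (h : ∀ a : G, f (AddMonoidAlgebra.single a 1) = g (AddMonoidAlgebra.single a 1)) :
    f = g := by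
  refine AddMonoidAlgebra.ringHom_ext (fun b => ?_) h
  have hb : (AddMonoidAlgebra.single (0 : G) b : AddMonoidAlgebra ℤ G) = b • 1 := by
    rw [AddMonoidAlgebra.one_def, AddMonoidAlgebra.smul_single]
    simp
  rw [hb, map_zsmul, map_zsmul, map_one, map_one]

/-- The section of exponents via a dual family `u`. -/
def rho (m : ℕ) (σ : Finset (Fin m)) {n : ℕ} (u : {j : Fin m // j ∈ σ} → Fin n → ℤ) :
    ↥(expSub m σ) →+ (Fin n → ℤ) where
  toFun b := fun k => ∑ j : {j : Fin m // j ∈ σ}, b.1 j.1 * u j k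
  map_zero' := by funext k; simp
  map_add' a b := by funext k; simp [add_mul, Finset.sum_add_distrib]

/-- The candidate inverse `ℤ[β_j^{±1} : j ∈ σ] → S^±_ℤ(α)/J_σ`. -/
def psiBar (n m : ℕ) (v : Fin m → Fin n → ℤ) (σ : Finset (Fin m))
    (u : {j : Fin m // j ∈ σ} → Fin n → ℤ) :
    FSig m σ →+* (LaurentA n ⧸ Jsig n m v σ) :=
  (Ideal.Quotient.mk _).comp (mapDomainRingHom ℤ (rho m σ u))

lemma psiBar_single (n m : ℕ) (v : Fin m → Fin n → ℤ) (σ : Finset (Fin m))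
    (u : {j : Fin m // j ∈ σ} → Fin n → ℤ) (b : ↥(expSub m σ)) (r : ℤ) :
    psiBar n m v σ u (AddMonoidAlgebra.single b r) =
      Ideal.Quotient.mk _ (AddMonoidAlgebra.single (rho m σ u b) r) := by
  simp [psiBar, Finsupp.mapDomain_single]

lemma theta_rho (n m : ℕ) (v : Fin m → Fin n → ℤ) (σ : Finset (Fin m))
    (u : {j : Fin m // j ∈ σ} → Fin n → ℤ)
    (hu : ∀ i j : {j : Fin m // j ∈ σ}, ∑ k, u j k * v i.1 k = if i = j then 1 else 0)
    (b : ↥(expSub m σ)) : theta n m v σ (rho m σ u b) = b := by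
  apply Subtype.ext; funext j
  rw [theta_val]
  by_cases h : j ∈ σ
  · simp only [if_pos h]
    have : ∀ k, rho m σ u b k = ∑ i : {j : Fin m // j ∈ σ}, b.1 i.1 * u i k := fun k => rfl
    calc ∑ k, rho m σ u b k * v j k
        = ∑ k, ∑ i : {j : Fin m // j ∈ σ}, b.1 i.1 * (u i k * v j k) := by
          simp only [this, Finset.sum_mul, mul_assoc]
      _ = ∑ i : {j : Fin m // j ∈ σ}, b.1 i.1 * ∑ k, u i k * v j k := by
          rw [Finset.sum_comm]; simp only [Finset.mul_sum]
      _ = b.1 j := by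
          have : ∀ i : {j : Fin m // j ∈ σ},
              (∑ k, u i k * v j k) = if (⟨j, h⟩ : {j : Fin m // j ∈ σ}) = i then 1 else 0 :=
            fun i => hu ⟨j, h⟩ i
          simp only [this, mul_ite, mul_one, mul_zero]
          simp
  · simp [h, b.2 j h]

lemma mk_rho_theta (n m : ℕ) (v : Fin m → Fin n → ℤ) (σ : Finset (Fin m))
    (u : {j : Fin m // j ∈ σ} → Fin n → ℤ)
    (hu : ∀ i j : {j : Fin m // j ∈ σ}, ∑ k, u j k * v i.1 k = if i = j then 1 else 0)
    (J : Fin n → ℤ) :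
    Ideal.Quotient.mk (Jsig n m v σ)
        (AddMonoidAlgebra.single (rho m σ u (theta n m v σ J)) 1) =
      Ideal.Quotient.mk _ (AddMonoidAlgebra.single J 1) := by
  rw [Ideal.Quotient.eq]
  set w : Fin n → ℤ := rho m σ u (theta n m v σ J) - J with hwdef
  have hgen : (1 : LaurentA n) - AddMonoidAlgebra.single w 1 ∈ Jsig n m v σ := by
    apply Ideal.subset_span
    refine ⟨w, fun j hj => ?_, rfl⟩
    have h1 := congrFun (congrArg Subtype.val
      (theta_rho n m v σ u hu (theta n m v σ J))) j
    rw [theta_val, theta_val] at h1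
    simp only [if_pos hj] at h1
    simp [hwdef, Pi.sub_apply, sub_mul, Finset.sum_sub_distrib, h1]
  have hmem := Ideal.mul_mem_left _ (-(AddMonoidAlgebra.single J 1 : LaurentA n)) hgen
  have heq : -(AddMonoidAlgebra.single J 1 : LaurentA n) *
      (1 - AddMonoidAlgebra.single w 1) =
      AddMonoidAlgebra.single (rho m σ u (theta n m v σ J)) 1 -
        AddMonoidAlgebra.single J 1 := by
    have hJw : J + w = rho m σ u (theta n m v σ J) := by funext k; simp [hwdef]
    rw [neg_mul, mul_sub, mul_one, AddMonoidAlgebra.single_mul_single, mul_one, hJw]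
    ring
  rwa [heq] at hmem

lemma phiBar_psiBar (n m : ℕ) (v : Fin m → Fin n → ℤ) (σ : Finset (Fin m))
    (u : {j : Fin m // j ∈ σ} → Fin n → ℤ)
    (hu : ∀ i j : {j : Fin m // j ∈ σ}, ∑ k, u j k * v i.1 k = if i = j then 1 else 0) :
    (phiBar n m v σ).comp (psiBar n m v σ u) = RingHom.id _ := by
  apply rh_ext; intro b
  rw [RingHom.comp_apply, psiBar_single, phiBar_mk_single,
    theta_rho n m v σ u hu b, RingHom.id_apply]

lemma psiBar_phiBar (n m : ℕ) (v : Fin m → Fin n → ℤ) (σ : Finset (Fin m))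
    (u : {j : Fin m // j ∈ σ} → Fin n → ℤ)
    (hu : ∀ i j : {j : Fin m // j ∈ σ}, ∑ k, u j k * v i.1 k = if i = j then 1 else 0) :
    (psiBar n m v σ u).comp (phiBar n m v σ) = RingHom.id _ := by
  apply Ideal.Quotient.ringHom_ext; apply rh_ext; intro J
  rw [RingHom.comp_apply, RingHom.comp_apply, phiBar_mk_single, psiBar_single,
    mk_rho_theta n m v σ u hu J]
  simp

lemma restr_phiBar (n m : ℕ) (v : Fin m → Fin n → ℤ) {σ τ : Finset (Fin m)} (h : σ ⊆ τ) :
    (restrR m σ τ).comp (phiBar n m v τ) =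
      (phiBar n m v σ).comp (Ideal.Quotient.factor (Jsig_anti n m v h)) := by
  apply Ideal.Quotient.ringHom_ext
  apply rh_ext
  intro J
  rw [RingHom.comp_apply, RingHom.comp_apply, RingHom.comp_apply, RingHom.comp_apply,
    Ideal.Quotient.factor_mk, phiBar_mk_single, phiBar_mk_single]
  show AddMonoidAlgebra.mapDomain (restrExp m σ τ) _ = _
  rw [AddMonoidAlgebra.mapDomain_single]
  congr 1
  apply Subtype.ext; funext j
  show (if j ∈ σ then (theta n m v τ J).1 j else 0) = (theta n m v σ J).1 j
  rw [theta_val, theta_val]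
  by_cases hs : j ∈ σ
  · simp [hs, h hs]
  · simp [hs]

end Prop74

/-- **Proposition 7.4.**
Let `Σ` be a smooth complete simplicial fan in `ℝⁿ`, encoded by ray vectors
`v₁,…,v_m ∈ ℤⁿ` and a finite abstract simplicial complex `K` on `{1,…,m}` such that
for every face `σ ∈ K` the vectors `{v_j : j ∈ σ}` extend to a `ℤ`-basis of `ℤⁿ`,
`cone(σ) ∩ cone(τ) = cone(σ ∩ τ)` for all faces, and the cones cover `ℝⁿ`.  Then for
each face `σ` the assignment `α^J ↦ ∏_{j∈σ} β_j^{⟨J,v_j⟩}` induces a well-defined ring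
isomorphism `S^±_ℤ(α)/J_σ → ℤ[β_j^{±1} : j ∈ σ]`, and these assemble into a ring
isomorphism `ξ*` from the algebra `P_K(α;Σ)` of integral piecewise Laurent polynomials
on `Σ` onto the Laurent face algebra `F_K[β;Σ]` (compatibly with
`ξ^{tr} : S^±_ℤ(α) → S^±_ℤ(β)`, `α^J ↦ β^{ξ^{tr}J}`, where `ξ` is the matrix with
columns the `v_j`). -/
theorem piecewise_laurent_iso_face_algebra (n m : ℕ)
    (v : Fin m → Fin n → ℤ) (K : Finset (Finset (Fin m)))
    (hempty : ∅ ∈ K) (hdown : ∀ σ ∈ K, ∀ τ ⊆ σ, τ ∈ K)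
    (hsmooth : ∀ σ ∈ K, ∃ (w : Fin n → Fin n → ℤ) (g : {j : Fin m // j ∈ σ} → Fin n),
      Function.Injective g ∧ (∀ j, w (g j) = v j.1) ∧ IsUnit (Matrix.of w).det)
    (hglue : ∀ σ ∈ K, ∀ τ ∈ K, coneR n m v σ ∩ coneR n m v τ = coneR n m v (σ ∩ τ))
    (hcover : ∀ x : Fin n → ℝ, ∃ σ ∈ K, x ∈ coneR n m v σ) :
    ∃ e : ∀ σ : {σ : Finset (Fin m) // σ ∈ K},
        (LaurentA n ⧸ Jsig n m v σ.1) ≃+* FSig m σ.1,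
      (∀ (σ : {σ : Finset (Fin m) // σ ∈ K}) (J : Fin n → ℤ),
        e σ (Ideal.Quotient.mk (Jsig n m v σ.1) (AddMonoidAlgebra.single J 1)) =
          AddMonoidAlgebra.single
            (⟨fun j => if j ∈ σ.1 then ∑ k, J k * v j k else 0,
              by intro j hj; simp [hj]⟩ : ↥(expSub m σ.1)) 1) ∧
      ∃ Ξ : Pring n m v K ≃+* Fring m K,
        ∀ (p : Pring n m v K) (σ : {σ : Finset (Fin m) // σ ∈ K}),
          (Ξ p).1 σ = e σ (p.1 σ) := by
  classical
  -- dual vectors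
  have hdual : ∀ σ : {σ : Finset (Fin m) // σ ∈ K},
      ∃ u : {j : Fin m // j ∈ σ.1} → Fin n → ℤ,
        ∀ i j : {j : Fin m // j ∈ σ.1},
          ∑ k, u j k * v i.1 k = if i = j then 1 else 0 := by
    intro σ
    obtain ⟨w, g, hg, hw, hdet⟩ := hsmooth σ.1 σ.2
    have hM : IsUnit (Matrix.of w) := (Matrix.isUnit_iff_isUnit_det _).mpr hdet
    have hmul : (Matrix.of w) * (Matrix.of w)⁻¹ = 1 := Matrix.mul_nonsing_inv _ hdet
    refine ⟨fun j k => (Matrix.of w)⁻¹ k (g j), fun i j => ?_⟩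
    have hentry := congrFun (congrFun hmul (g i)) (g j)
    rw [Matrix.mul_apply] at hentry
    have : ∑ k, (Matrix.of w)⁻¹ k (g j) * v i.1 k
        = ∑ k, Matrix.of w (g i) k * (Matrix.of w)⁻¹ k (g j) := by
      refine Finset.sum_congr rfl fun k _ => ?_
      rw [Matrix.of_apply, hw i, mul_comm]
    rw [this, hentry, Matrix.one_apply]
    simp [hg.eq_iff]
  choose u hu using hdual
  set e : ∀ σ : {σ : Finset (Fin m) // σ ∈ K},
      (LaurentA n ⧸ Jsig n m v σ.1) ≃+* FSig m σ.1 := fun σ =>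
    { toFun := Prop74.phiBar n m v σ.1
      invFun := Prop74.psiBar n m v σ.1 (u σ)
      left_inv := fun x =>
        RingHom.congr_fun (Prop74.psiBar_phiBar n m v σ.1 (u σ) (hu σ)) x
      right_inv := fun x =>
        RingHom.congr_fun (Prop74.phiBar_psiBar n m v σ.1 (u σ) (hu σ)) x
      map_mul' := map_mul _
      map_add' := map_add _ } with he
  have hcompat : ∀ (σ τ : {σ : Finset (Fin m) // σ ∈ K}) (h : σ.1 ⊆ τ.1)
      (x : LaurentA n ⧸ Jsig n m v τ.1),
      restrR m σ.1 τ.1 (e τ x) =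
        e σ (Ideal.Quotient.factor (Jsig_anti n m v h) x) := by
    intro σ τ h x
    exact RingHom.congr_fun (Prop74.restr_phiBar n m v h) x
  refine ⟨e, fun σ J => Prop74.phiBar_mk_single n m v σ.1 J 1, ?_⟩
  refine ⟨{ toFun := fun p => ⟨fun σ => e σ (p.1 σ), fun σ τ h => by
              rw [hcompat σ τ h, p.2 σ τ h]⟩
            invFun := fun q => ⟨fun σ => (e σ).symm (q.1 σ), fun σ τ h => by
              apply (e σ).injective
              rw [← hcompat σ τ h]
              simp [q.2 σ τ h]⟩
            left_inv := fun p => Subtype.ext (funext fun σ => (e σ).symm_apply_apply _)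
            right_inv := fun q => Subtype.ext (funext fun σ => (e σ).apply_symm_apply _)
            map_mul' := fun p q => Subtype.ext (funext fun σ => map_mul (e σ) _ _)
            map_add' := fun p q => Subtype.ext (funext fun σ => map_add (e σ) _ _) },
    fun p σ => rfl⟩
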